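/- Let Γ be an injective compressed LOT, Γ₁ a maximal proper sub-LOT with compressed quotient Γ̄₁, and Γ̄₂ a maximal proper sub-LOT of Γ̄₁ whose collapse Γ̄₁₂ is not compressed. Then Γ freely decomposes, i.e., Γ = Γ_L ∪ Γ_R where Γ_L and Γ_R are proper sub-LOTs of Γ intersecting in a single vertex. -/

import Mathlib

/-- A labeled oriented graph (LOG): an oriented graph whose edges are labeled by vertices.
A labeled oriented tree (LOT) is a LOG satisfying `IsTree`. -/
structure LOG where
  V : Type
  E : Type
  src : E → V
  tgt : E → V
  lab : E → V

namespace LOG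

variable (G : LOG)

/-- Adjacency in the underlying undirected graph. -/
def Adj (v w : G.V) : Prop :=
  ∃ e, (G.src e = v ∧ G.tgt e = w) ∨ (G.src e = w ∧ G.tgt e = v)

/-- Adjacency using only edges from `S`. -/
def AdjOn (S : Set G.E) (v w : G.V) : Prop :=
  ∃ e ∈ S, (G.src e = v ∧ G.tgt e = w) ∨ (G.src e = w ∧ G.tgt e = v)

/-- The vertices incident to an edge set. -/
def verts (S : Set G.E) : Set G.V := {v | ∃ e ∈ S, G.src e = v ∨ G.tgt e = v}

/-- Connectivity of the subgraph spanned by the edge set `S`. -/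
def ConnOn (S : Set G.E) : Prop :=
  ∀ v ∈ G.verts S, ∀ w ∈ G.verts S, Relation.ReflTransGen (G.AdjOn S) v w

/-- The underlying graph is a finite tree: connected, without loops or multiple edges,
and with one more vertex than edges. -/
def IsTree : Prop :=
  Finite G.V ∧ Finite G.E ∧ Nonempty G.V ∧
  (∀ v w : G.V, Relation.ReflTransGen G.Adj v w) ∧
  (∀ e, G.src e ≠ G.tgt e) ∧
  (∀ e e', ({G.src e, G.tgt e} : Set G.V) = {G.src e', G.tgt e'} → e = e') ∧
  Nat.card G.V = Nat.card G.E + 1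

/-- No edge is labeled with one of its own endpoints. -/
def Compressed : Prop := ∀ e, G.lab e ≠ G.src e ∧ G.lab e ≠ G.tgt e

/-- Each vertex occurs as an edge label at most once. -/
def Inj : Prop := ∀ e e', G.lab e = G.lab e' → e = e'

/-- A leaf (boundary vertex): a vertex incident with exactly one edge. -/
def IsLeaf (v : G.V) : Prop := {e | G.src e = v ∨ G.tgt e = v}.ncard = 1

/-- Every boundary vertex occurs as an edge label. -/
def BoundaryReduced : Prop := ∀ v, G.IsLeaf v → ∃ e, G.lab e = v

/-- Reduced: compressed and boundary reduced. -/
def Reduced : Prop := G.Compressed ∧ G.BoundaryReduced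

/-- A sub-LOT, given by a nonempty connected set of edges all of whose labels are
vertices of the subgraph. -/
def IsSubLOT (S : Set G.E) : Prop :=
  S.Nonempty ∧ G.ConnOn S ∧ ∀ e ∈ S, G.lab e ∈ G.verts S

/-- A proper sub-LOT. -/
def ProperSubLOT (S : Set G.E) : Prop := G.IsSubLOT S ∧ S ≠ Set.univ

/-- A maximal proper sub-LOT. -/
def MaxProperSubLOT (S : Set G.E) : Prop :=
  G.ProperSubLOT S ∧ ∀ T, G.ProperSubLOT T → S ⊆ T → S = T

/-- A prime LOG: one with no proper sub-LOT. -/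
def Prime : Prop := ∀ S, ¬ G.ProperSubLOT S

/-- A LOG freely decomposes if it is the union of two proper sub-LOTs meeting in a
single vertex. -/
def FreelyDecomposes : Prop :=
  ∃ (SL SR : Set G.E) (x : G.V), G.ProperSubLOT SL ∧ G.ProperSubLOT SR ∧
    SL ∪ SR = Set.univ ∧ G.verts SL ∩ G.verts SR = {x}

/-- The map collapsing the vertices of the subgraph spanned by `S` to the vertex `x`. -/
noncomputable def collapseMap (S : Set G.E) (x : G.V) : G.V → G.V :=
  fun v => letI := Classical.dec (v ∈ G.verts S); if v ∈ G.verts S then x else v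

/-- The quotient LOG obtained by collapsing the sub-LOT `S` to the vertex `x`
(the vertex of `S` not occurring as an edge label of `S`).  The edges are the edges
outside `S`; endpoints and labels are pushed forward along the collapse map. -/
noncomputable def collapse (S : Set G.E) (x : G.V) : LOG where
  V := G.V
  E := {e : G.E // e ∉ S}
  src e := G.collapseMap S x (G.src e.1)
  tgt e := G.collapseMap S x (G.tgt e.1)
  lab e := G.collapseMap S x (G.lab e.1)

end LOG


namespace LOG

lemma adjOn_symm {G : LOG} {S : Set G.E} : Symmetric (G.AdjOn S) := by
  rintro v w ⟨e, he, h⟩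
  exact ⟨e, he, h.symm⟩

lemma rtg_symm {G : LOG} {S : Set G.E} {v w : G.V}
    (h : Relation.ReflTransGen (G.AdjOn S) v w) :
    Relation.ReflTransGen (G.AdjOn S) w v :=
  by
    induction h with
    | refl => exact Relation.ReflTransGen.refl
    | tail _ hbc ih => exact Relation.ReflTransGen.head (adjOn_symm hbc) ih

lemma adjOn_mono {G : LOG} {S T : Set G.E} (hST : S ⊆ T) {v w : G.V}
    (h : G.AdjOn S v w) : G.AdjOn T v w := by
  obtain ⟨e, he, h⟩ := h
  exact ⟨e, hST he, h⟩

lemma rtg_lift {α : Type*} {r s : α → α → Prop}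
    (h : ∀ x y, r x y → Relation.ReflTransGen s x y) {a b : α}
    (hab : Relation.ReflTransGen r a b) : Relation.ReflTransGen s a b := by
  induction hab with
  | refl => exact Relation.ReflTransGen.refl
  | tail _ hstep ih => exact ih.trans (h _ _ hstep)

lemma rtg_cross {α : Type*} {r : α → α → Prop} {P : α → Prop} {a b : α}
    (hab : Relation.ReflTransGen r a b) (ha : P a) :
    ¬ P b → ∃ x y, r x y ∧ P x ∧ ¬ P y := by
  induction hab with
  | refl => exact fun hb => absurd ha hb
  | @tail b c hab hbc ih =>
    intro hc
    by_cases hb : P b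
    · exact ⟨b, c, hbc, hb, hc⟩
    · exact ih hb

lemma verts_mono {G : LOG} {S T : Set G.E} (hST : S ⊆ T) : G.verts S ⊆ G.verts T := by
  rintro v ⟨e, he, h⟩
  exact ⟨e, hST he, h⟩

lemma sublot_insert {Γ : LOG} {S : Set Γ.E} (hS : Γ.IsSubLOT S) {e : Γ.E} {p : Γ.V}
    (hp : Γ.src e = p ∨ Γ.tgt e = p) (hpS : p ∈ Γ.verts S)
    (hlab : Γ.lab e ∈ Γ.verts S) : Γ.IsSubLOT (S ∪ {e}) := by
  obtain ⟨⟨f₀, hf₀⟩, hconn, hlabS⟩ := hS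
  have hsub : S ⊆ S ∪ {e} := Set.subset_union_left
  have heSR : e ∈ S ∪ {e} := Or.inr rfl
  have hto_p : ∀ v ∈ Γ.verts (S ∪ {e}), Relation.ReflTransGen (Γ.AdjOn (S ∪ {e})) v p := by
    rintro v ⟨g, hg | hg, hv⟩
    · exact rtg_lift (fun x y h => Relation.ReflTransGen.single (adjOn_mono hsub h))
        (hconn v ⟨g, hg, hv⟩ p hpS)
    · have hge : g = e := hg
      subst hge
      rcases hv with hv | hv <;> rcases hp with hp | hp
      · subst hv; rw [← hp]
      · subst hv; subst hp
        exact Relation.ReflTransGen.single ⟨g, heSR, Or.inl ⟨rfl, rfl⟩⟩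
      · subst hv; subst hp
        exact Relation.ReflTransGen.single ⟨g, heSR, Or.inr ⟨rfl, rfl⟩⟩
      · subst hv; rw [← hp]
  refine ⟨⟨f₀, Or.inl hf₀⟩, ?_, ?_⟩
  · intro v hv w hw
    exact (hto_p v hv).trans (rtg_symm (hto_p w hw))
  · rintro g (hg | hg)
    · exact verts_mono hsub (hlabS g hg)
    · have hge : g = e := hg
      subst hge
      exact verts_mono hsub hlab

/-- Case where `x₁` is a vertex of the sub-LOT `S₂` of the quotient: contradiction with
maximality of `S₁`. -/
lemma case_ii (G : LOG)
    (S₁ : Set G.E) (hS₁ : G.MaxProperSubLOT S₁)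
    (x₁ : G.V) (hx₁ : x₁ ∈ G.verts S₁)
    (S₂ : Set (G.collapse S₁ x₁).E)
    (hS₂sub : (G.collapse S₁ x₁).IsSubLOT S₂)
    (e₀ : G.E) (he₀ : e₀ ∉ S₁)
    (he₀S₂ : (⟨e₀, he₀⟩ : (G.collapse S₁ x₁).E) ∉ S₂)
    (hx₁B : x₁ ∈ (G.collapse S₁ x₁).verts S₂) : False := by
  have hcA : ∀ v ∈ G.verts S₁, (G.collapseMap S₁ x₁) v = x₁ := fun v hv => if_pos hv
  have hcN : ∀ v, v ∉ G.verts S₁ → (G.collapseMap S₁ x₁) v = v := fun v hv => if_neg hv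
  have hsrc : ∀ f : (G.collapse S₁ x₁).E, (G.collapse S₁ x₁).src f = (G.collapseMap S₁ x₁) (G.src f.1) := fun _ => rfl
  have htgt : ∀ f : (G.collapse S₁ x₁).E, (G.collapse S₁ x₁).tgt f = (G.collapseMap S₁ x₁) (G.tgt f.1) := fun _ => rfl
  have hlabeq : ∀ f : (G.collapse S₁ x₁).E, (G.collapse S₁ x₁).lab f = (G.collapseMap S₁ x₁) (G.lab f.1) := fun _ => rfl
  set S2 : Set G.E := {f | ∃ h : f ∉ S₁, (⟨f, h⟩ : (G.collapse S₁ x₁).E) ∈ S₂} with hS2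
  set T : Set G.E := S₁ ∪ S2 with hT
  obtain ⟨⟨hS₁ne, hS₁conn, hS₁lab⟩, hS₁neq⟩ := hS₁.1
  obtain ⟨hS₂ne, hS₂conn, hS₂lab⟩ := hS₂sub
  have hsubT₁ : S₁ ⊆ T := Set.subset_union_left
  have hsubT₂ : S2 ⊆ T := Set.subset_union_right
  -- v ∈ (G.collapse S₁ x₁).verts S₂ with v ∉ verts S₁ is a genuine vertex of S2
  have hBv : ∀ v ∈ (G.collapse S₁ x₁).verts S₂, v ∉ G.verts S₁ → v ∈ G.verts S2 := by
    rintro v ⟨f, hf, hv⟩ hvA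
    have hfS2 : f.1 ∈ S2 := ⟨f.2, hf⟩
    rcases hv with hv | hv
    · rw [hsrc] at hv
      by_cases h : G.src f.1 ∈ G.verts S₁
      · rw [hcA _ h] at hv; exact absurd (hv ▸ hx₁) hvA
      · rw [hcN _ h] at hv; exact ⟨f.1, hfS2, Or.inl hv⟩
    · rw [htgt] at hv
      by_cases h : G.tgt f.1 ∈ G.verts S₁
      · rw [hcA _ h] at hv; exact absurd (hv ▸ hx₁) hvA
      · rw [hcN _ h] at hv; exact ⟨f.1, hfS2, Or.inr hv⟩
  have stitch : ∀ p : G.V, Relation.ReflTransGen (G.AdjOn T) ((G.collapseMap S₁ x₁) p) p := by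
    intro p
    by_cases hp : p ∈ G.verts S₁
    · rw [hcA p hp]
      exact rtg_lift (fun x y h => Relation.ReflTransGen.single (adjOn_mono hsubT₁ h))
        (hS₁conn x₁ hx₁ p hp)
    · rw [hcN p hp]
  have lift : ∀ {v w}, Relation.ReflTransGen ((G.collapse S₁ x₁).AdjOn S₂) v w →
      Relation.ReflTransGen (G.AdjOn T) v w := by
    intro v w h
    refine rtg_lift ?_ h
    rintro a b ⟨f, hf, hor⟩
    have hfT : f.1 ∈ T := hsubT₂ ⟨f.2, hf⟩
    rcases hor with ⟨h1, h2⟩ | ⟨h1, h2⟩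
    · rw [hsrc] at h1; rw [htgt] at h2
      refine (h1 ▸ stitch (G.src f.1)).trans ?_
      refine (Relation.ReflTransGen.single ⟨f.1, hfT, Or.inl ⟨rfl, rfl⟩⟩).trans ?_
      exact h2 ▸ rtg_symm (stitch (G.tgt f.1))
    · rw [hsrc] at h1; rw [htgt] at h2
      refine (h2 ▸ stitch (G.tgt f.1)).trans ?_
      refine (Relation.ReflTransGen.single ⟨f.1, hfT, Or.inr ⟨rfl, rfl⟩⟩).trans ?_
      exact h1 ▸ rtg_symm (stitch (G.src f.1))
  have hTverts : ∀ v ∈ G.verts T, Relation.ReflTransGen (G.AdjOn T) v x₁ := by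
    rintro v ⟨f, hf | hf, hv⟩
    · exact rtg_lift (fun x y h => Relation.ReflTransGen.single (adjOn_mono hsubT₁ h))
        (hS₁conn v ⟨f, hf, hv⟩ x₁ hx₁)
    · by_cases h : v ∈ G.verts S₁
      · exact rtg_lift (fun x y h => Relation.ReflTransGen.single (adjOn_mono hsubT₁ h))
          (hS₁conn v h x₁ hx₁)
      · obtain ⟨hf1, hf2⟩ := hf
        have hcv : (G.collapseMap S₁ x₁) v = v := hcN v h
        have hvB : v ∈ (G.collapse S₁ x₁).verts S₂ := by
          rcases hv with hv | hv
          · exact ⟨⟨f, hf1⟩, hf2, Or.inl (by show G.collapseMap S₁ x₁ (G.src f) = v; rw [hv, hcv])⟩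
          · exact ⟨⟨f, hf1⟩, hf2, Or.inr (by show G.collapseMap S₁ x₁ (G.tgt f) = v; rw [hv, hcv])⟩
        exact lift (hS₂conn v hvB x₁ hx₁B)
  have hTsub : G.IsSubLOT T := by
    refine ⟨hS₁ne.mono hsubT₁, ?_, ?_⟩
    · intro v hv w hw
      exact (hTverts v hv).trans (rtg_symm (hTverts w hw))
    · rintro f (hf | hf)
      · exact verts_mono hsubT₁ (hS₁lab f hf)
      · obtain ⟨hf1, hf2⟩ := hf
        have := hS₂lab ⟨f, hf1⟩ hf2
        replace this : G.collapseMap S₁ x₁ (G.lab f) ∈ (G.collapse S₁ x₁).verts S₂ := this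
        by_cases h : G.lab f ∈ G.verts S₁
        · exact verts_mono hsubT₁ h
        · rw [hcN _ h] at this
          exact verts_mono hsubT₂ (hBv _ this h)
  have hTne : T ≠ Set.univ := by
    intro h
    have he : e₀ ∈ T := h ▸ Set.mem_univ e₀
    rcases he with h1 | h2
    · exact he₀ h1
    · obtain ⟨hh, h2⟩ := h2
      exact he₀S₂ h2
  have hST : S₁ = T := hS₁.2 T ⟨hTsub, hTne⟩ hsubT₁
  obtain ⟨f₂, hf₂⟩ := hS₂ne
  have hf₂T : f₂.1 ∈ T := hsubT₂ ⟨f₂.2, hf₂⟩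
  rw [← hST] at hf₂T
  exact f₂.2 hf₂T

/-- Case where `x₁` is not a vertex of `S₂`: the free decomposition. -/
lemma case_i (G : LOG)
    (S₁ : Set G.E) (hS₁p : G.ProperSubLOT S₁)
    (x₁ : G.V) (hx₁ : x₁ ∈ G.verts S₁)
    (S₂ : Set (G.collapse S₁ x₁).E)
    (hS₂sub : (G.collapse S₁ x₁).IsSubLOT S₂)
    (e₀ : G.E) (he₀ : e₀ ∉ S₁)
    (hUniv : ∀ f : (G.collapse S₁ x₁).E, f ∈ S₂ ∨ f.1 = e₀)
    (hx₁B : x₁ ∉ (G.collapse S₁ x₁).verts S₂)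
    (u t : G.V)
    (hut : (G.src e₀ = u ∧ G.tgt e₀ = t) ∨ (G.src e₀ = t ∧ G.tgt e₀ = u))
    (hcu : G.collapseMap S₁ x₁ u ∈ (G.collapse S₁ x₁).verts S₂)
    (hct : G.collapseMap S₁ x₁ t = x₁)
    (hlab : G.collapseMap S₁ x₁ (G.lab e₀) ∈ (G.collapse S₁ x₁).verts S₂) :
    G.FreelyDecomposes := by
  have hcA : ∀ v ∈ G.verts S₁, (G.collapseMap S₁ x₁) v = x₁ := fun v hv => if_pos hv
  have hcN : ∀ v, v ∉ G.verts S₁ → (G.collapseMap S₁ x₁) v = v := fun v hv => if_neg hv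
  have hsrc : ∀ f : (G.collapse S₁ x₁).E, (G.collapse S₁ x₁).src f = (G.collapseMap S₁ x₁) (G.src f.1) := fun _ => rfl
  have htgt : ∀ f : (G.collapse S₁ x₁).E, (G.collapse S₁ x₁).tgt f = (G.collapseMap S₁ x₁) (G.tgt f.1) := fun _ => rfl
  have hlabeq : ∀ f : (G.collapse S₁ x₁).E, (G.collapse S₁ x₁).lab f = (G.collapseMap S₁ x₁) (G.lab f.1) := fun _ => rfl
  obtain ⟨⟨hS₁ne, hS₁conn, hS₁lab⟩, hS₁neq⟩ := hS₁p
  obtain ⟨hS₂ne, hS₂conn, hS₂lab⟩ := hS₂sub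
  set S2 : Set G.E := {f | ∃ h : f ∉ S₁, (⟨f, h⟩ : (G.collapse S₁ x₁).E) ∈ S₂} with hS2
  set SR : Set G.E := S2 ∪ {e₀} with hSR
  have hsub2 : S2 ⊆ SR := Set.subset_union_left
  have he₀SR : e₀ ∈ SR := Or.inr rfl
  have key : ∀ v, (G.collapseMap S₁ x₁) v ∈ (G.collapse S₁ x₁).verts S₂ → v ∉ G.verts S₁ ∧ v ∈ (G.collapse S₁ x₁).verts S₂ ∧ (G.collapseMap S₁ x₁) v = v := by
    intro v hv
    by_cases h : v ∈ G.verts S₁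
    · rw [hcA v h] at hv; exact absurd hv hx₁B
    · rw [hcN v h] at hv; exact ⟨h, hv, hcN v h⟩
  have htA : t ∈ G.verts S₁ := by
    by_contra h
    have : t = x₁ := by rw [← hcN t h, hct]
    exact h (this ▸ hx₁)
  obtain ⟨huA, huB, hcuu⟩ := key u hcu
  -- every vertex of (G.collapse S₁ x₁).verts S₂ is a genuine vertex of S2
  have hBmem : ∀ v ∈ (G.collapse S₁ x₁).verts S₂, v ∈ G.verts S2 ∧ v ∉ G.verts S₁ := by
    rintro v ⟨f, hf, hv⟩
    have hfS2 : f.1 ∈ S2 := ⟨f.2, hf⟩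
    rcases hv with hv | hv
    · rw [hsrc] at hv
      obtain ⟨hpA, hpB, hcp⟩ := key (G.src f.1) (by rw [hv]; exact ⟨f, hf, Or.inl (hsrc f ▸ hv)⟩)
      have hpv : G.src f.1 = v := by rw [← hcp, hv]
      exact ⟨⟨f.1, hfS2, Or.inl hpv⟩, hpv ▸ hpA⟩
    · rw [htgt] at hv
      obtain ⟨hpA, hpB, hcp⟩ := key (G.tgt f.1) (by rw [hv]; exact ⟨f, hf, Or.inr (htgt f ▸ hv)⟩)
      have hpv : G.tgt f.1 = v := by rw [← hcp, hv]
      exact ⟨⟨f.1, hfS2, Or.inr hpv⟩, hpv ▸ hpA⟩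
  -- vertices of S2 edges avoid verts S₁, and lifting of adjacency
  have hstep : ∀ a b, (G.collapse S₁ x₁).AdjOn S₂ a b → G.AdjOn SR a b := by
    rintro a b ⟨f, hf, hor⟩
    have hfSR : f.1 ∈ SR := hsub2 ⟨f.2, hf⟩
    have hsB : (G.collapseMap S₁ x₁) (G.src f.1) ∈ (G.collapse S₁ x₁).verts S₂ := ⟨f, hf, Or.inl rfl⟩
    have htB : (G.collapseMap S₁ x₁) (G.tgt f.1) ∈ (G.collapse S₁ x₁).verts S₂ := ⟨f, hf, Or.inr rfl⟩
    obtain ⟨_, _, hcs⟩ := key _ hsB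
    obtain ⟨_, _, hctg⟩ := key _ htB
    rcases hor with ⟨h1, h2⟩ | ⟨h1, h2⟩
    · rw [hsrc, hcs] at h1; rw [htgt, hctg] at h2
      exact ⟨f.1, hfSR, Or.inl ⟨h1, h2⟩⟩
    · rw [hsrc, hcs] at h1; rw [htgt, hctg] at h2
      exact ⟨f.1, hfSR, Or.inr ⟨h1, h2⟩⟩
  have huS2 : u ∈ G.verts S2 := (hBmem u huB).1
  -- connectivity of SR: everything reaches u
  have hconn_u : ∀ v ∈ G.verts SR, Relation.ReflTransGen (G.AdjOn SR) v u := by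
    rintro v ⟨f, hf | hf, hv⟩
    · have hfS2 : f ∈ S2 := hf
      obtain ⟨hf1, hf2⟩ := hfS2
      have hvB : v ∈ (G.collapse S₁ x₁).verts S₂ := by
        rcases hv with hv | hv
        · have hsB : (G.collapseMap S₁ x₁) (G.src f) ∈ (G.collapse S₁ x₁).verts S₂ := ⟨⟨f, hf1⟩, hf2, Or.inl rfl⟩
          obtain ⟨_, hB, hcs⟩ := key _ hsB
          exact hv ▸ hB
        · have htB : (G.collapseMap S₁ x₁) (G.tgt f) ∈ (G.collapse S₁ x₁).verts S₂ := ⟨⟨f, hf1⟩, hf2, Or.inr rfl⟩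
          obtain ⟨_, hB, hctg⟩ := key _ htB
          exact hv ▸ hB
      exact rtg_lift (fun a b h => Relation.ReflTransGen.single (hstep a b h))
        (hS₂conn v hvB u huB)
    · have hfe : f = e₀ := hf
      rw [hfe] at hv
      have hvu : v = u ∨ v = t := by
        rcases hv with hv | hv <;> rcases hut with ⟨h1, h2⟩ | ⟨h1, h2⟩
        · exact Or.inl (hv.symm.trans h1)
        · exact Or.inr (hv.symm.trans h1)
        · exact Or.inr (hv.symm.trans h2)
        · exact Or.inl (hv.symm.trans h2)
      rcases hvu with rfl | rfl
      · exact Relation.ReflTransGen.refl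
      · exact Relation.ReflTransGen.single ⟨e₀, he₀SR, hut.symm⟩
  have hSRconn : G.ConnOn SR := by
    intro v hv w hw
    exact (hconn_u v hv).trans (rtg_symm (hconn_u w hw))
  have hSRlab : ∀ f ∈ SR, G.lab f ∈ G.verts SR := by
    rintro f (hf | hf)
    · obtain ⟨hf1, hf2⟩ := hf
      have := hS₂lab ⟨f, hf1⟩ hf2
      replace this : G.collapseMap S₁ x₁ (G.lab f) ∈ (G.collapse S₁ x₁).verts S₂ := this
      obtain ⟨_, hB, hcl⟩ := key _ this
      exact verts_mono hsub2 (hBmem _ hB).1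
    · have hfe : f = e₀ := hf
      rw [hfe]
      obtain ⟨_, hB, hcl⟩ := key _ hlab
      exact verts_mono hsub2 (hBmem _ hB).1
  have hSRsub : G.IsSubLOT SR := ⟨⟨e₀, he₀SR⟩, hSRconn, hSRlab⟩
  have hSRne : SR ≠ Set.univ := by
    intro h
    obtain ⟨f₀, hf₀⟩ := hS₁ne
    have : f₀ ∈ SR := h ▸ Set.mem_univ f₀
    rcases this with h1 | h2
    · exact h1.1 hf₀
    · exact he₀ ((h2 : f₀ = e₀) ▸ hf₀)
  have hunion : S₁ ∪ SR = Set.univ := by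
    ext f
    simp only [Set.mem_univ, iff_true]
    by_cases h : f ∈ S₁
    · exact Or.inl h
    · rcases hUniv ⟨f, h⟩ with h2 | h2
      · exact Or.inr (Or.inl ⟨h, h2⟩)
      · exact Or.inr (Or.inr h2)
  have hinter : G.verts S₁ ∩ G.verts SR = {t} := by
    ext v
    constructor
    · rintro ⟨hvA, f, hf | hf, hv⟩
      · obtain ⟨hf1, hf2⟩ := hf
        exfalso
        rcases hv with hv | hv
        · have hsB : (G.collapseMap S₁ x₁) (G.src f) ∈ (G.collapse S₁ x₁).verts S₂ := ⟨⟨f, hf1⟩, hf2, Or.inl rfl⟩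
          exact (key _ hsB).1 (hv ▸ hvA)
        · have htB : (G.collapseMap S₁ x₁) (G.tgt f) ∈ (G.collapse S₁ x₁).verts S₂ := ⟨⟨f, hf1⟩, hf2, Or.inr rfl⟩
          exact (key _ htB).1 (hv ▸ hvA)
      · have hfe : f = e₀ := hf
        subst hfe
        have hvu : v = u ∨ v = t := by
          rcases hv with hv | hv <;> rcases hut with ⟨h1, h2⟩ | ⟨h1, h2⟩
          · exact Or.inl (hv.symm.trans h1)
          · exact Or.inr (hv.symm.trans h1)
          · exact Or.inr (hv.symm.trans h2)
          · exact Or.inl (hv.symm.trans h2)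
        rcases hvu with rfl | rfl
        · exact absurd hvA huA
        · rfl
    · rintro rfl
      refine ⟨htA, e₀, he₀SR, ?_⟩
      rcases hut with ⟨h1, h2⟩ | ⟨h1, h2⟩
      · exact Or.inr h2
      · exact Or.inl h1
  exact ⟨S₁, SR, t, ⟨⟨hS₁ne, hS₁conn, hS₁lab⟩, hS₁neq⟩, ⟨hSRsub, hSRne⟩, hunion, hinter⟩

end LOG

/-- Let `Γ` be an injective compressed LOT, `Γ₁` (edge set `S₁`, collapsed
to the vertex `x₁`) a maximal proper sub-LOT with compressed quotient `Γ̄₁`, and `Γ̄₂`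
(edge set `S₂`, collapsed to `x₂`) a maximal proper sub-LOT of `Γ̄₁` whose collapse `Γ̄₁₂`
is not compressed.  Then `Γ` freely decomposes: `Γ = Γ_L ∪ Γ_R` with `Γ_L, Γ_R` proper
sub-LOTs intersecting in a single vertex. -/
theorem two_stage_collapse_free_decomposition
    (G : LOG) (hT : G.IsTree) (hC : G.Compressed) (hI : G.Inj)
    (S₁ : Set G.E) (hS₁ : G.MaxProperSubLOT S₁)
    (x₁ : G.V) (hx₁ : x₁ ∈ G.verts S₁) (hx₁lab : ∀ e ∈ S₁, G.lab e ≠ x₁)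
    (hQ₁ : (G.collapse S₁ x₁).Compressed)
    (S₂ : Set (G.collapse S₁ x₁).E) (hS₂ : (G.collapse S₁ x₁).MaxProperSubLOT S₂)
    (x₂ : (G.collapse S₁ x₁).V) (hx₂ : x₂ ∈ (G.collapse S₁ x₁).verts S₂)
    (hx₂lab : ∀ e ∈ S₂, (G.collapse S₁ x₁).lab e ≠ x₂)
    (hQ₁₂ : ¬ ((G.collapse S₁ x₁).collapse S₂ x₂).Compressed) :
    G.FreelyDecomposes := by
  classical
  obtain ⟨hS₂p, hS₂max⟩ := hS₂
  obtain ⟨hS₂sub, hS₂neq⟩ := hS₂p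
  have hsrc : ∀ f : (G.collapse S₁ x₁).E,
      (G.collapse S₁ x₁).src f = G.collapseMap S₁ x₁ (G.src f.1) := fun _ => rfl
  have htgt : ∀ f : (G.collapse S₁ x₁).E,
      (G.collapse S₁ x₁).tgt f = G.collapseMap S₁ x₁ (G.tgt f.1) := fun _ => rfl
  have hlabeq : ∀ f : (G.collapse S₁ x₁).E,
      (G.collapse S₁ x₁).lab f = G.collapseMap S₁ x₁ (G.lab f.1) := fun _ => rfl
  -- extract the witness of non-compressedness of the double quotient
  rw [LOG.Compressed] at hQ₁₂
  push_neg at hQ₁₂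
  obtain ⟨eb, heb⟩ := hQ₁₂
  -- if the collapse map of S₂ identifies two distinct vertices, both lie in verts S₂
  have both : ∀ a b : (G.collapse S₁ x₁).V,
      (G.collapse S₁ x₁).collapseMap S₂ x₂ a = (G.collapse S₁ x₁).collapseMap S₂ x₂ b →
      a ≠ b → a ∈ (G.collapse S₁ x₁).verts S₂ ∧ b ∈ (G.collapse S₁ x₁).verts S₂ := by
    intro a b h hne
    by_cases ha : a ∈ (G.collapse S₁ x₁).verts S₂ <;>
      by_cases hb : b ∈ (G.collapse S₁ x₁).verts S₂
    · exact ⟨ha, hb⟩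
    · have h1 : (G.collapse S₁ x₁).collapseMap S₂ x₂ a = x₂ := if_pos ha
      have h2 : (G.collapse S₁ x₁).collapseMap S₂ x₂ b = b := if_neg hb
      rw [h1, h2] at h
      exact absurd (h ▸ hx₂) hb
    · have h1 : (G.collapse S₁ x₁).collapseMap S₂ x₂ a = a := if_neg ha
      have h2 : (G.collapse S₁ x₁).collapseMap S₂ x₂ b = x₂ := if_pos hb
      rw [h1, h2] at h
      exact absurd (h.symm ▸ hx₂) ha
    · have h1 : (G.collapse S₁ x₁).collapseMap S₂ x₂ a = a := if_neg ha
      have h2 : (G.collapse S₁ x₁).collapseMap S₂ x₂ b = b := if_neg hb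
      rw [h1, h2] at h
      exact absurd h hne
  have hQe := hQ₁ eb.1
  have hlabB : (G.collapse S₁ x₁).lab eb.1 ∈ (G.collapse S₁ x₁).verts S₂ ∧
      ((G.collapse S₁ x₁).src eb.1 ∈ (G.collapse S₁ x₁).verts S₂ ∨
       (G.collapse S₁ x₁).tgt eb.1 ∈ (G.collapse S₁ x₁).verts S₂) := by
    by_cases hls : ((G.collapse S₁ x₁).collapse S₂ x₂).lab eb =
        ((G.collapse S₁ x₁).collapse S₂ x₂).src eb
    · obtain ⟨h1, h2⟩ := both _ _ hls hQe.1
      exact ⟨h1, Or.inl h2⟩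
    · obtain ⟨h1, h2⟩ := both _ _ (heb hls) hQe.2
      exact ⟨h1, Or.inr h2⟩
  obtain ⟨hlB, hendB⟩ := hlabB
  -- S₂ together with eb.1 is a sub-LOT of the quotient, hence everything
  have hT' : (G.collapse S₁ x₁).IsSubLOT (S₂ ∪ {eb.1}) := by
    rcases hendB with h | h
    · exact LOG.sublot_insert hS₂sub (Or.inl rfl) h hlB
    · exact LOG.sublot_insert hS₂sub (Or.inr rfl) h hlB
  have hUniv : ∀ f : (G.collapse S₁ x₁).E, f ∈ S₂ ∨ f.1 = eb.1.1 := by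
    by_cases hu : (S₂ ∪ {eb.1}) = Set.univ
    · intro f
      have : f ∈ S₂ ∪ {eb.1} := hu ▸ Set.mem_univ f
      rcases this with h | h
      · exact Or.inl h
      · exact Or.inr (congrArg Subtype.val (h : f = eb.1))
    · exfalso
      have := hS₂max _ ⟨hT', hu⟩ Set.subset_union_left
      exact eb.2 (Set.Subset.antisymm_iff.mp this.symm |>.1 (Or.inr rfl))
  -- there is an edge outside S₁ with an endpoint among the vertices of S₁
  have hbd : ∃ f : G.E, ∃ hf : f ∉ S₁,
      (G.src f ∈ G.verts S₁ ∨ G.tgt f ∈ G.verts S₁) := by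
    by_contra hno
    push_neg at hno
    have he₀A := hno eb.1.1 eb.1.2
    obtain ⟨a, b, hab, ha, hb⟩ := LOG.rtg_cross (P := fun v => v ∉ G.verts S₁)
      (hT.2.2.2.1 (G.src eb.1.1) x₁) he₀A.1 (fun h => h hx₁)
    obtain ⟨g, hg⟩ := hab
    by_cases hgS : g ∈ S₁
    · rcases hg with ⟨h1, h2⟩ | ⟨h1, h2⟩
      · exact ha ⟨g, hgS, Or.inl h1⟩
      · exact ha ⟨g, hgS, Or.inr h2⟩
    · have := hno g hgS
      rcases hg with ⟨h1, h2⟩ | ⟨h1, h2⟩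
      · exact hb (h2 ▸ this.2)
      · exact hb (h1 ▸ this.1)
  obtain ⟨f, hf, hfend⟩ := hbd
  have hcA : ∀ v ∈ G.verts S₁, G.collapseMap S₁ x₁ v = x₁ := fun v hv => if_pos hv
  -- from this edge, locate x₁
  have hx₁loc : x₁ ∈ (G.collapse S₁ x₁).verts S₂ ∨
      G.collapseMap S₁ x₁ (G.src eb.1.1) = x₁ ∨ G.collapseMap S₁ x₁ (G.tgt eb.1.1) = x₁ := by
    rcases hUniv ⟨f, hf⟩ with h | h
    · rcases hfend with hfe | hfe
      · exact Or.inl ⟨⟨f, hf⟩, h, Or.inl ((hsrc ⟨f, hf⟩).trans (hcA _ hfe))⟩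
      · exact Or.inl ⟨⟨f, hf⟩, h, Or.inr ((htgt ⟨f, hf⟩).trans (hcA _ hfe))⟩
    · have hfe₀ : f = eb.1.1 := h
      subst hfe₀
      rcases hfend with hfe | hfe
      · exact Or.inr (Or.inl (hcA _ hfe))
      · exact Or.inr (Or.inr (hcA _ hfe))
  by_cases hx₁B : x₁ ∈ (G.collapse S₁ x₁).verts S₂
  · exact absurd hx₁B (fun hB => LOG.case_ii G S₁ hS₁ x₁ hx₁ S₂ hS₂sub eb.1.1 eb.1.2
      (fun h => eb.2 (by exact h)) hB)
  · have hloc : G.collapseMap S₁ x₁ (G.src eb.1.1) = x₁ ∨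
        G.collapseMap S₁ x₁ (G.tgt eb.1.1) = x₁ := by
      rcases hx₁loc with h | h
      · exact absurd h hx₁B
      · exact h
    have hlB' : G.collapseMap S₁ x₁ (G.lab eb.1.1) ∈ (G.collapse S₁ x₁).verts S₂ := by
      rw [← hlabeq]; exact hlB
    rcases hendB with hB | hB
    · -- src is a vertex of S₂, so tgt collapses to x₁
      have hsB : G.collapseMap S₁ x₁ (G.src eb.1.1) ∈ (G.collapse S₁ x₁).verts S₂ := by
        rw [← hsrc]; exact hB
      have hct : G.collapseMap S₁ x₁ (G.tgt eb.1.1) = x₁ := by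
        rcases hloc with h | h
        · rw [h] at hsB; exact absurd hsB hx₁B
        · exact h
      exact LOG.case_i G S₁ hS₁.1 x₁ hx₁ S₂ hS₂sub eb.1.1 eb.1.2 hUniv hx₁B
        (G.src eb.1.1) (G.tgt eb.1.1) (Or.inl ⟨rfl, rfl⟩) hsB hct hlB'
    · have htB : G.collapseMap S₁ x₁ (G.tgt eb.1.1) ∈ (G.collapse S₁ x₁).verts S₂ := by
        rw [← htgt]; exact hB
      have hcs : G.collapseMap S₁ x₁ (G.src eb.1.1) = x₁ := by
        rcases hloc with h | h
        · exact h
        · rw [h] at htB; exact absurd htB hx₁B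
      exact LOG.case_i G S₁ hS₁.1 x₁ hx₁ S₂ hS₂sub eb.1.1 eb.1.2 hUniv hx₁B
        (G.tgt eb.1.1) (G.src eb.1.1) (Or.inr ⟨rfl, rfl⟩) htB hcs hlB'
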